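/- The n-dimensional complex algebra A with basis e₁,…,eₙ and nonzero products e₁e₁ = 2e₁, e₁e_j = e_j, e_je_j = e₁ (j = 2,…,n) is a simple left-symmetric algebra: it has no two-sided ideals other than 0 and A. -/
import Mathlib

/-- The product of the algebra with basis e₁,…,eₙ and nonzero products
e₁e₁ = 2e₁, e₁e_j = e_j, e_je_j = e₁ (j ≥ 2), written in coordinates. -/
noncomputable def simpleMul (n : ℕ) [NeZero n] (x y : Fin n → ℂ) : Fin n → ℂ :=
  fun i => if i = 0 then (∑ j, x j * y j) + x 0 * y 0 else x 0 * y i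

private lemma sum_if0 {n : ℕ} [NeZero n] (f g : Fin n → ℂ) :
    (∑ j, (if j = (0 : Fin n) then f j else g j)) = f 0 + ∑ j, g j - g 0 := by
  have : ∀ j : Fin n, (if j = (0 : Fin n) then f j else g j)
      = g j + (if j = (0 : Fin n) then f j - g j else 0) := by
    intro j; split <;> ring
  simp only [this, Finset.sum_add_distrib, Finset.sum_ite_eq' Finset.univ (0 : Fin n)]
  simp; ring

theorem stmt_14 (n : ℕ) [NeZero n] (hn : 2 ≤ n) :
    (∀ x y z : Fin n → ℂ,
      simpleMul n (simpleMul n x y) z - simpleMul n x (simpleMul n y z) =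
      simpleMul n (simpleMul n y x) z - simpleMul n y (simpleMul n x z)) ∧
    (∀ I : Submodule ℂ (Fin n → ℂ),
      (∀ x y : Fin n → ℂ, x ∈ I → simpleMul n y x ∈ I) →
      (∀ x y : Fin n → ℂ, x ∈ I → simpleMul n x y ∈ I) →
      I = ⊥ ∨ I = ⊤) := by
  constructor
  · -- Left-symmetry
    intro x y z
    have cxy : ∑ j, y j * x j = ∑ j, x j * y j :=
      Finset.sum_congr rfl fun j _ => mul_comm _ _
    have h1 : ∀ a b : Fin n → ℂ, ∀ c : ℂ, ∑ j, c * a j * b j = c * ∑ j, a j * b j := by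
      intro a b c; rw [Finset.mul_sum]; exact Finset.sum_congr rfl fun j _ => mul_assoc _ _ _
    have h2 : ∀ a b : Fin n → ℂ, ∀ c : ℂ, ∑ j, a j * (c * b j) = c * ∑ j, a j * b j := by
      intro a b c; rw [Finset.mul_sum]; exact Finset.sum_congr rfl fun j _ => mul_left_comm _ _ _
    funext i
    simp only [Pi.sub_apply, simpleMul]
    by_cases hi : i = 0
    · simp only [hi, if_true, ite_true, ite_mul, mul_ite, sum_if0, h1, h2, cxy]
      ring
    · simp only [if_neg hi, ite_true, ite_mul, mul_ite, sum_if0, cxy]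
      ring
  · -- Simplicity
    intro I hL hR
    by_cases hb : I = ⊥
    · exact Or.inl hb
    right
    set e1 : Fin n → ℂ := fun i => if i = 0 then 1 else 0 with he1
    obtain ⟨v, hv, hv0⟩ := Submodule.exists_mem_ne_zero_of_ne_bot hb
    have he1I : e1 ∈ I := by
      by_cases hv00 : v 0 = 0
      · have : ∃ k, v k ≠ 0 := by
          by_contra h; push_neg at h; exact hv0 (funext h)
        obtain ⟨k, hk⟩ := this
        have hk0 : k ≠ 0 := by rintro rfl; exact hk hv00
        have key : simpleMul n (fun i => if i = k then 1 else 0) v = v k • e1 := by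
          funext i
          simp only [simpleMul, he1, Pi.smul_apply, smul_eq_mul]
          by_cases hi : i = 0
          · simp [hi, if_neg (Ne.symm hk0), ite_mul, Finset.sum_ite_eq' Finset.univ k, hv00]
          · simp [hi, if_neg (Ne.symm hk0)]
        have := hL v (fun i => if i = k then 1 else 0) hv
        rw [key] at this
        have := I.smul_mem (v k)⁻¹ this
        rwa [smul_smul, inv_mul_cancel₀ hk, one_smul] at this
      · have key : simpleMul n v e1 = (2 * v 0) • e1 := by
          funext i
          simp only [simpleMul, he1, Pi.smul_apply, smul_eq_mul]
          by_cases hi : i = 0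
          · simp [hi, mul_ite, Finset.sum_ite_eq' Finset.univ (0 : Fin n)]; ring
          · simp [hi]
        have := hR v e1 hv
        rw [key] at this
        have h2 : (2 : ℂ) * v 0 ≠ 0 := by simp [hv00]
        have := I.smul_mem (2 * v 0)⁻¹ this
        rwa [smul_smul, inv_mul_cancel₀ h2, one_smul] at this
    rw [Submodule.eq_top_iff']
    intro w
    have key : simpleMul n e1 w = w + w 0 • e1 := by
      funext i
      simp only [simpleMul, he1, Pi.add_apply, Pi.smul_apply, smul_eq_mul]
      by_cases hi : i = 0
      · simp [hi, ite_mul, Finset.sum_ite_eq' Finset.univ (0 : Fin n)]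
      · simp [hi]
    have h := hR e1 w he1I
    rw [key] at h
    have := I.sub_mem h (I.smul_mem (w 0) he1I)
    simpa using this
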